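/- For disjoint S ⊆ N and T ⊆ N∖S and a permutation ((1),...,(|S|)) of S, the following n+1 points belong to F, satisfy the inequality (π_S'x_S + √(Σ_{i∈T} a_i y_i²) − α_S'(x_S − y_S))² + Σ_{i∈N∖(S∪T)} a_i y_i² ≤ z² at equality, and are affinely independent: (x,y,z) = (0,0,0); (x,y,z) = (Σ_{k≤i} e_(k) + Σ_{j∈T} e_j, Σ_{k≤i} e_(k) + Σ_{j∈T} e_j, √(Σ_{k≤i} a_(k) + Σ_{j∈T} a_j)) for i = 1,...,|S|; and (x,y,z) = (e_i, e_i, √a_i) for each i ∈ N∖S. -/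
import Mathlib
set_option maxRecDepth 10000
set_option maxHeartbeats 4000000


open Finset in
/-- The `n+1` points of the remark after inequality (9): `(0,0,0)`; for each
`i = 1,...,|S|` the point
`(∑_{k≤i} e_(k) + ∑_{j∈T} e_j, ∑_{k≤i} e_(k) + ∑_{j∈T} e_j, √(∑_{k≤i} a_(k) + a(T)))`
(indexed by the element of `S` in position `i` of the permutation `e`); and
`(e_i, e_i, √a_i)` for each `i ∈ N∖S`. -/
noncomputable def tightPointsII (n : ℕ) (a : Fin n → ℝ) (S T : Finset (Fin n))
    (e : Fin S.card ≃ {i // i ∈ S}) :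
    Option (Fin n) → (Fin n → ℝ) × (Fin n → ℝ) × ℝ
  | none => ((fun _ => 0), (fun _ => 0), 0)
  | some i =>
    if h : i ∈ S then
      ((fun m => if hm : m ∈ S then
          (if e.symm ⟨m, hm⟩ ≤ e.symm ⟨i, h⟩ then 1 else 0)
        else (if m ∈ T then 1 else 0)),
       (fun m => if hm : m ∈ S then
          (if e.symm ⟨m, hm⟩ ≤ e.symm ⟨i, h⟩ then 1 else 0)
        else (if m ∈ T then 1 else 0)),
       Real.sqrt ((∑ j ∈ univ.filter (fun j => j ≤ e.symm ⟨i, h⟩), a (e j))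
          + ∑ j ∈ T, a j))
    else
      ((fun m => if m = i then 1 else 0), (fun m => if m = i then 1 else 0),
       Real.sqrt (a i))


open Finset

section Aux
variable {n : ℕ} (a : Fin n → ℝ) (S T : Finset (Fin n)) (e : Fin S.card ≃ {i // i ∈ S})

noncomputable def posS (S : Finset (Fin n)) (e : Fin S.card ≃ {i // i ∈ S}) (i : Fin n) : ℕ :=
  if hi : i ∈ S then (e.symm ⟨i, hi⟩ : ℕ) else 0

lemma posS_apply (q : Fin S.card) : posS S e ↑(e q) = (q : ℕ) := by
  simp [posS, (e q).2]

lemma posS_mem (i : Fin n) (hi : i ∈ S) :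
    posS S e i = ((e.symm ⟨i, hi⟩ : Fin S.card) : ℕ) := by simp [posS, hi]

lemma tp_some_mem (i : Fin n) (h : i ∈ S) :
    tightPointsII n a S T e (some i) =
      ((fun m => if hm : m ∈ S then
          (if e.symm ⟨m, hm⟩ ≤ e.symm ⟨i, h⟩ then 1 else 0)
        else (if m ∈ T then 1 else 0)),
       (fun m => if hm : m ∈ S then
          (if e.symm ⟨m, hm⟩ ≤ e.symm ⟨i, h⟩ then 1 else 0)
        else (if m ∈ T then 1 else 0)),
       Real.sqrt ((∑ j ∈ univ.filter (fun j => j ≤ e.symm ⟨i, h⟩), a (e j))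
          + ∑ j ∈ T, a j)) := by
  show dite _ _ _ = _
  rw [dif_pos h]

lemma tp_some_not (i : Fin n) (h : i ∉ S) :
    tightPointsII n a S T e (some i) =
      ((fun m => if m = i then 1 else 0), (fun m => if m = i then 1 else 0),
       Real.sqrt (a i)) := by
  show dite _ _ _ = _
  rw [dif_neg h]

lemma tp_none : tightPointsII n a S T e none = ((fun _ => 0), (fun _ => 0), 0) := rfl

lemma tp_fst_mem (i : Fin n) (h : i ∈ S) (m : Fin n) :
    (tightPointsII n a S T e (some i)).1 m =
      if m ∈ S then (if posS S e m ≤ posS S e i then 1 else 0)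
      else if m ∈ T then 1 else 0 := by
  rw [tp_some_mem a S T e i h]
  by_cases hm : m ∈ S
  · simp only [posS, dif_pos hm, dif_pos h, if_pos hm, Fin.le_def]
  · simp only [dif_neg hm, if_neg hm]

lemma tp_fst_not (i : Fin n) (h : i ∉ S) (m : Fin n) :
    (tightPointsII n a S T e (some i)).1 m = if m = i then 1 else 0 := by
  rw [tp_some_not a S T e i h]

lemma tp_z_mem (i : Fin n) (h : i ∈ S) :
    (tightPointsII n a S T e (some i)).2.2 =
      Real.sqrt ((∑ j ∈ univ.filter (fun j => j ≤ e.symm ⟨i, h⟩), a (e j))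
          + ∑ j ∈ T, a j) := by
  rw [tp_some_mem a S T e i h]

lemma tp_z_not (i : Fin n) (h : i ∉ S) :
    (tightPointsII n a S T e (some i)).2.2 = Real.sqrt (a i) := by
  rw [tp_some_not a S T e i h]

lemma tp_snd_eq_fst (j : Option (Fin n)) :
    (tightPointsII n a S T e j).2.1 = (tightPointsII n a S T e j).1 := by
  cases j with
  | none => rfl
  | some i =>
    by_cases h : i ∈ S
    · rw [tp_some_mem a S T e i h]
    · rw [tp_some_not a S T e i h]

lemma sum_S_eq (f : Fin n → ℝ) : ∑ i ∈ S, f i = ∑ q : Fin S.card, f ↑(e q) := by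
  rw [← Finset.sum_coe_sort S f]
  exact (Equiv.sum_comp e (fun s : {i // i ∈ S} => f ↑s)).symm

lemma tele_sum {m : ℕ} (f : ℕ → ℝ) (p : Fin m) :
    ∑ k : Fin m, (f ((k : ℕ) + 1) - f (k : ℕ)) * (if (k : ℕ) ≤ (p : ℕ) then 1 else 0)
      = f ((p : ℕ) + 1) - f 0 := by
  have h1 : ∀ k : Fin m, (f ((k : ℕ) + 1) - f (k : ℕ)) * (if (k : ℕ) ≤ (p : ℕ) then 1 else 0)
      = (fun t => if t ≤ (p : ℕ) then f (t + 1) - f t else 0) (k : ℕ) := by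
    intro k; simp only []; split <;> simp
  rw [Finset.sum_congr rfl fun k _ => h1 k,
    Fin.sum_univ_eq_sum_range (fun t => if t ≤ (p : ℕ) then f (t + 1) - f t else 0)]
  rw [← Finset.sum_filter]
  have hp := p.isLt
  have h2 : (Finset.range m).filter (fun t => t ≤ (p : ℕ)) = Finset.range ((p : ℕ) + 1) := by
    ext t; simp [Nat.lt_succ_iff]; omega
  rw [h2, Finset.sum_range_sub]

end Aux

lemma sum_split {n : ℕ} (S : Finset (Fin n)) (e : Fin S.card ≃ {i // i ∈ S}) (g : Fin n → ℝ) :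
    ∑ i : Fin n, g i
      = (∑ q : Fin S.card, g ↑(e q)) + ∑ i ∈ univ.filter (fun i => i ∉ S), g i := by
  rw [← Finset.sum_filter_add_sum_filter_not univ (fun i => i ∈ S)]
  congr 1
  rw [show univ.filter (fun i : Fin n => i ∈ S) = S by ext; simp]
  exact sum_S_eq S e g

/-- **Tightness of the lifted nonlinear polymatroid inequality II.** For disjoint
`S ⊆ N` and `T ⊆ N∖S` and a permutation `e` of `S`, the `n+1` points
`tightPointsII` belong to
`F = {(x,y,z) ∈ {0,1}^N × ℝ₊^N × ℝ₊ : ∑ a i y i² ≤ z², 0 ≤ y ≤ x}`, satisfy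
`(π_S'x_S + √(∑_{i∈T} a i y i²) − α_S'(x_S − y_S))² + ∑_{i∈N∖(S∪T)} a i y i² = z²`,
and are affinely independent. -/
theorem lifted_nonlinear_polymatroid_II_tight
    (n : ℕ) (a : Fin n → ℝ) (ha : ∀ i, 0 < a i)
    (S T : Finset (Fin n)) (hST : Disjoint S T)
    (e : Fin S.card ≃ {i // i ∈ S}) :
    (∀ j : Option (Fin n),
        (∀ i, (tightPointsII n a S T e j).1 i = 0 ∨
              (tightPointsII n a S T e j).1 i = 1) ∧
        (∀ i, 0 ≤ (tightPointsII n a S T e j).2.1 i ∧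
              (tightPointsII n a S T e j).2.1 i ≤ (tightPointsII n a S T e j).1 i) ∧
        0 ≤ (tightPointsII n a S T e j).2.2 ∧
        ∑ i, a i * (tightPointsII n a S T e j).2.1 i ^ 2
          ≤ (tightPointsII n a S T e j).2.2 ^ 2) ∧
    (∀ j : Option (Fin n),
        (∑ k, (Real.sqrt ((∑ i ∈ T, a i)
                  + ∑ l ∈ Finset.univ.filter (fun l => l ≤ k), a (e l))
              - Real.sqrt ((∑ i ∈ T, a i)
                  + ∑ l ∈ Finset.univ.filter (fun l => l < k), a (e l)))
                * (tightPointsII n a S T e j).1 (e k)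
          + Real.sqrt (∑ i ∈ T, a i * (tightPointsII n a S T e j).2.1 i ^ 2)
          - ∑ k, (a (e k)
                / Real.sqrt ((∑ i ∈ T, a i)
                    + ∑ l ∈ Finset.univ.filter (fun l => l ≤ k), a (e l)))
                * ((tightPointsII n a S T e j).1 (e k)
                    - (tightPointsII n a S T e j).2.1 (e k))) ^ 2
          + ∑ i ∈ Finset.univ \ (S ∪ T),
              a i * (tightPointsII n a S T e j).2.1 i ^ 2
          = (tightPointsII n a S T e j).2.2 ^ 2) ∧
    AffineIndependent ℝ (tightPointsII n a S T e) := by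
  classical
  have haT : (0:ℝ) ≤ ∑ j ∈ T, a j := Finset.sum_nonneg fun j _ => (ha j).le
  have hTS : ∀ i ∈ T, i ∉ S := fun i hi => Finset.disjoint_right.mp hST hi
  -- key sum for S-points
  have hsum : ∀ (i : Fin n) (h : i ∈ S),
      (∑ m, a m * ((tightPointsII n a S T e (some i)).1 m) ^ 2)
        = (∑ l ∈ univ.filter (fun l => l ≤ e.symm ⟨i, h⟩), a (e l)) + ∑ j ∈ T, a j := by
    intro i h
    have step1 : ∀ m : Fin n, a m * ((tightPointsII n a S T e (some i)).1 m) ^ 2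
        = if m ∈ S then (if posS S e m ≤ posS S e i then a m else 0)
          else (if m ∈ T then a m else 0) := by
      intro m
      rw [tp_fst_mem a S T e i h m]
      by_cases h1 : m ∈ S <;> by_cases h2 : posS S e m ≤ posS S e i <;>
        by_cases h3 : m ∈ T <;> simp [h1, h2, h3]
    rw [Finset.sum_congr rfl fun m _ => step1 m, sum_split S e]
    congr 1
    · rw [Finset.sum_congr rfl (fun q (_ : q ∈ univ) => if_pos (e q).2)]
      have : ∀ q : Fin S.card,
          (if posS S e ↑(e q) ≤ posS S e i then a ↑(e q) else 0)
            = (if q ≤ e.symm ⟨i, h⟩ then a ↑(e q) else 0) := by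
        intro q
        rw [posS_apply, posS_mem S e i h]
        exact if_congr Fin.le_def.symm rfl rfl
      rw [Finset.sum_congr rfl fun q _ => this q, Finset.sum_filter]
    · rw [Finset.sum_congr rfl
        (fun m hm => if_neg (by simpa using (Finset.mem_filter.mp hm).2)),
        ← Finset.sum_filter]
      congr 1
      ext m
      simp only [Finset.mem_filter, Finset.mem_univ, true_and]
      exact ⟨fun h' => h'.2, fun h' => ⟨hTS m h', h'⟩⟩
  refine ⟨?_, ?_, ?_⟩
  · -- membership in F
    intro j
    have hbin : ∀ m, (tightPointsII n a S T e j).1 m = 0 ∨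
        (tightPointsII n a S T e j).1 m = 1 := by
      cases j with
      | none => intro m; left; rfl
      | some i =>
        by_cases h : i ∈ S
        · intro m; rw [tp_fst_mem a S T e i h m]; split_ifs <;> simp
        · intro m; rw [tp_fst_not a S T e i h m]; split_ifs <;> simp
    refine ⟨hbin, ?_, ?_, ?_⟩
    · intro m
      have hy := congrFun (tp_snd_eq_fst a S T e j) m
      refine ⟨?_, le_of_eq hy⟩
      rw [hy]; rcases hbin m with h' | h' <;> rw [h'] <;> norm_num
    · cases j with
      | none => exact le_refl 0
      | some i =>
        by_cases h : i ∈ S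
        · rw [tp_z_mem a S T e i h]; exact Real.sqrt_nonneg _
        · rw [tp_z_not a S T e i h]; exact Real.sqrt_nonneg _
    · simp only [tp_snd_eq_fst a S T e]
      cases j with
      | none => simp [tp_none]
      | some i =>
        by_cases h : i ∈ S
        · rw [hsum i h, tp_z_mem a S T e i h, Real.sq_sqrt
            (add_nonneg (Finset.sum_nonneg fun l _ => (ha _).le) haT)]
        · rw [tp_z_not a S T e i h, Real.sq_sqrt (ha i).le]
          have : ∀ m : Fin n, a m * ((tightPointsII n a S T e (some i)).1 m) ^ 2
              = if m = i then a m else 0 := by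
            intro m
            rw [tp_fst_not a S T e i h m]
            split <;> simp
          rw [Finset.sum_congr rfl fun m _ => this m, Finset.sum_ite_eq' univ i a,
            if_pos (Finset.mem_univ i)]
  · -- tightness
    intro j
    simp only [tp_snd_eq_fst a S T e, sub_self, mul_zero, Finset.sum_const_zero, sub_zero]
    cases j with
    | none =>
      simp [tp_none]
    | some i =>
      by_cases h : i ∈ S
      · -- point indexed by i ∈ S
        set p : Fin S.card := e.symm ⟨i, h⟩ with hp
        set f : ℕ → ℝ := fun t => Real.sqrt ((∑ i ∈ T, a i)
            + ∑ l ∈ univ.filter (fun l : Fin S.card => (l:ℕ) < t), a ↑(e l)) with hf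
        have hx : ∀ k : Fin S.card, (tightPointsII n a S T e (some i)).1 ↑(e k)
            = if (k:ℕ) ≤ (p:ℕ) then 1 else 0 := by
          intro k
          rw [tp_fst_mem a S T e i h, if_pos (e k).2, posS_apply, posS_mem S e i h]
        have hk1 : ∀ k : Fin S.card,
            Real.sqrt ((∑ i ∈ T, a i) + ∑ l ∈ univ.filter (fun l => l ≤ k), a ↑(e l))
              = f ((k:ℕ) + 1) := by
          intro k
          have hfl : univ.filter (fun l : Fin S.card => l ≤ k)
              = univ.filter (fun l : Fin S.card => (l:ℕ) < (k:ℕ) + 1) := by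
            ext l; simp only [Finset.mem_filter, Finset.mem_univ, true_and, Fin.le_def, Nat.lt_succ_iff]
          simp only [hf, hfl]
        have hk2 : ∀ k : Fin S.card,
            Real.sqrt ((∑ i ∈ T, a i) + ∑ l ∈ univ.filter (fun l => l < k), a ↑(e l))
              = f (k:ℕ) := by
          intro k
          have hfl : univ.filter (fun l : Fin S.card => l < k)
              = univ.filter (fun l : Fin S.card => (l:ℕ) < (k:ℕ)) := by
            ext l; simp only [Finset.mem_filter, Finset.mem_univ, true_and, Fin.lt_def]
          simp only [hf, hfl]
        have hf0 : f 0 = Real.sqrt (∑ i ∈ T, a i) := by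
          rw [hf]
          norm_num
        have hsum1 : ∑ k, (Real.sqrt ((∑ i ∈ T, a i)
                  + ∑ l ∈ Finset.univ.filter (fun l => l ≤ k), a (e l))
              - Real.sqrt ((∑ i ∈ T, a i)
                  + ∑ l ∈ Finset.univ.filter (fun l => l < k), a (e l)))
                * (tightPointsII n a S T e (some i)).1 (e k)
            = f ((p:ℕ) + 1) - f 0 := by
          rw [Finset.sum_congr rfl fun k _ => by rw [hk1 k, hk2 k, hx k]]
          exact tele_sum f p
        have hT1 : ∑ m ∈ T, a m * ((tightPointsII n a S T e (some i)).1 m) ^ 2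
            = ∑ m ∈ T, a m := by
          refine Finset.sum_congr rfl fun m hm => ?_
          rw [tp_fst_mem a S T e i h m, if_neg (hTS m hm), if_pos hm]
          ring
        have hrest : ∑ m ∈ univ \ (S ∪ T),
            a m * ((tightPointsII n a S T e (some i)).1 m) ^ 2 = 0 := by
          refine Finset.sum_eq_zero fun m hm => ?_
          rw [Finset.mem_sdiff, Finset.mem_union] at hm
          rw [tp_fst_mem a S T e i h m, if_neg (fun hh => hm.2 (Or.inl hh)),
            if_neg (fun hh => hm.2 (Or.inr hh))]
          ring
        rw [hsum1, hT1, hrest, hf0, tp_z_mem a S T e i h, add_zero]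
        have hin : f ((p:ℕ) + 1) - Real.sqrt (∑ i ∈ T, a i) + Real.sqrt (∑ i ∈ T, a i)
            = f ((p:ℕ) + 1) := by ring
        rw [hin, ← hk1 p, Real.sq_sqrt
            (add_nonneg haT (Finset.sum_nonneg fun l _ => (ha _).le)),
          Real.sq_sqrt (add_nonneg (Finset.sum_nonneg fun l _ => (ha _).le) haT)]
        rw [add_comm]
      · -- point indexed by i ∉ S
        have h1 : ∀ k : Fin S.card, (tightPointsII n a S T e (some i)).1 ↑(e k) = 0 := by
          intro k
          rw [tp_fst_not a S T e i h]
          exact if_neg (fun heq => h (by rw [← heq]; exact (e k).2))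
        have h2 : ∑ m ∈ T, a m * ((tightPointsII n a S T e (some i)).1 m) ^ 2
            = if i ∈ T then a i else 0 := by
          rw [Finset.sum_congr rfl (fun m _ => ?_), Finset.sum_ite_eq' T i a]
          rw [tp_fst_not a S T e i h m]
          split <;> simp
        have h3 : ∑ m ∈ univ \ (S ∪ T),
            a m * ((tightPointsII n a S T e (some i)).1 m) ^ 2
            = if i ∈ univ \ (S ∪ T) then a i else 0 := by
          rw [Finset.sum_congr rfl (fun m _ => ?_), Finset.sum_ite_eq' _ i a]
          rw [tp_fst_not a S T e i h m]
          split <;> simp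
        rw [Finset.sum_congr rfl fun k _ => by rw [h1 k, mul_zero],
          Finset.sum_const_zero, h2, h3, tp_z_not a S T e i h,
          Real.sq_sqrt (ha i).le]
        by_cases hiT : i ∈ T
        · rw [if_pos hiT, if_neg (by simp [Finset.mem_sdiff, hiT]), zero_add, add_zero,
            Real.sq_sqrt (ha i).le]
        · rw [if_neg hiT, Real.sqrt_zero, if_pos (by simp [h, hiT])]
          ring
  · -- affine independence
    rw [affineIndependent_iff]
    suffices hkey : ∀ w : Option (Fin n) → ℝ, ∑ j, w j = 0 →
        (∑ j, w j • tightPointsII n a S T e j) = 0 → ∀ j, w j = 0 by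
      intro s w hw0 hws j hj
      have h0 : ∑ j' : Option (Fin n), (if j' ∈ s then w j' else 0) = 0 := by
        rw [Finset.sum_ite_mem, Finset.univ_inter]; exact hw0
      have h1 : ∑ j' : Option (Fin n),
          (if j' ∈ s then w j' else 0) • tightPointsII n a S T e j' = 0 := by
        have hstep : ∀ j' : Option (Fin n), (if j' ∈ s then w j' else 0) •
            tightPointsII n a S T e j'
            = if j' ∈ s then w j' • tightPointsII n a S T e j' else 0 := by
          intro j'; split <;> simp
        rw [Finset.sum_congr rfl fun j' _ => hstep j', Finset.sum_ite_mem,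
          Finset.univ_inter]
        exact hws
      have := hkey _ h0 h1 j
      rwa [if_pos hj] at this
    intro w hw0 hws
    have coord : ∀ m₀ : Fin n,
        ∑ i : Fin n, w (some i) * (tightPointsII n a S T e (some i)).1 m₀ = 0 := by
      intro m₀
      have h3 : ∑ j : Option (Fin n), w j * (tightPointsII n a S T e j).1 m₀ = 0 := by
        have hz : (∑ j : Option (Fin n), w j • tightPointsII n a S T e j).1 m₀ = 0 := by
          rw [hws]; rfl
        rw [Prod.fst_sum, Finset.sum_apply] at hz
        simpa using hz
      rw [Fintype.sum_option] at h3
      simpa [tp_none] using h3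
    have coordS : ∀ p : Fin S.card,
        ∑ q : Fin S.card, (if (p:ℕ) ≤ (q:ℕ) then w (some ↑(e q)) else 0) = 0 := by
      intro p
      have h1 := coord ↑(e p)
      rw [sum_split S e] at h1
      have h2 : ∀ q : Fin S.card,
          w (some ↑(e q)) * (tightPointsII n a S T e (some ↑(e q))).1 ↑(e p)
            = (if (p:ℕ) ≤ (q:ℕ) then w (some ↑(e q)) else 0) := by
        intro q
        rw [tp_fst_mem a S T e _ (e q).2, if_pos (e p).2, posS_apply, posS_apply]
        split <;> simp
      have h3 : ∀ i ∈ univ.filter (fun i : Fin n => i ∉ S),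
          w (some i) * (tightPointsII n a S T e (some i)).1 ↑(e p) = 0 := by
        intro i hi
        have hiS : i ∉ S := by simpa using hi
        rw [tp_fst_not a S T e i hiS, if_neg (fun heq => hiS (by rw [← heq]; exact (e p).2))]
        ring
      rw [Finset.sum_congr rfl fun q _ => h2 q, Finset.sum_eq_zero h3, add_zero] at h1
      exact h1
    have gz : ∀ k : ℕ, ∀ q : Fin S.card, S.card ≤ (q : ℕ) + k → w (some ↑(e q)) = 0 := by
      intro k
      induction k with
      | zero =>
        intro q hq
        have := q.isLt
        omega
      | succ k ih =>
        intro q hq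
        have hE := coordS q
        rw [← Finset.sum_filter] at hE
        have hsplit : univ.filter (fun q' : Fin S.card => (q : ℕ) ≤ (q' : ℕ))
            = insert q (univ.filter fun q' : Fin S.card => (q : ℕ) < (q' : ℕ)) := by
          ext q'
          simp only [Finset.mem_filter, Finset.mem_univ, true_and, Finset.mem_insert,
            Fin.ext_iff]
          omega
        rw [hsplit, Finset.sum_insert (by simp)] at hE
        have h0 : ∑ q' ∈ univ.filter (fun q' : Fin S.card => (q:ℕ) < (q':ℕ)),
            w (some ↑(e q')) = 0 :=
          Finset.sum_eq_zero fun q' hq' => ih q' (by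
            have := (Finset.mem_filter.mp hq').2; omega)
        rw [h0, add_zero] at hE
        exact hE
    have csum : ∑ q : Fin S.card, w (some ↑(e q)) = 0 :=
      Finset.sum_eq_zero fun q _ => gz S.card q (by omega)
    have cnotS : ∀ i, i ∉ S → w (some i) = 0 := by
      intro i hiS
      have h1 := coord i
      rw [sum_split S e] at h1
      have h2 : ∑ q : Fin S.card,
          w (some ↑(e q)) * (tightPointsII n a S T e (some ↑(e q))).1 i = 0 := by
        have hq : ∀ q : Fin S.card, (tightPointsII n a S T e (some ↑(e q))).1 i
            = if i ∈ T then 1 else 0 := by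
          intro q; rw [tp_fst_mem a S T e _ (e q).2, if_neg hiS]
        rw [Finset.sum_congr rfl fun q _ => by rw [hq q]]
        by_cases hiT : i ∈ T
        · simp only [if_pos hiT, mul_one]; exact csum
        · simp [hiT]
      have h3 : ∑ j ∈ univ.filter (fun j : Fin n => j ∉ S),
          w (some j) * (tightPointsII n a S T e (some j)).1 i = w (some i) := by
        have hstep : ∀ j ∈ univ.filter (fun j : Fin n => j ∉ S),
            w (some j) * (tightPointsII n a S T e (some j)).1 i
              = if j = i then w (some j) else 0 := by
          intro j hj
          rw [tp_fst_not a S T e j (by simpa using hj)]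
          rcases eq_or_ne j i with rfl | hne
          · simp
          · rw [if_neg (fun hh => hne hh.symm), if_neg hne]; ring
        rw [Finset.sum_congr rfl hstep, Finset.sum_ite_eq' _ i (fun j => w (some j)),
          if_pos (by simp [hiS])]
      rw [h2, h3, zero_add] at h1
      exact h1
    have callzero : ∀ i, w (some i) = 0 := by
      intro i
      by_cases hi : i ∈ S
      · have := gz S.card (e.symm ⟨i, hi⟩) (by omega)
        simpa using this
      · exact cnotS i hi
    have hnone : w none = 0 := by
      have h1 : w none + ∑ i : Fin n, w (some i) = 0 := by
        rw [← Fintype.sum_option]; exact hw0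
      rw [Finset.sum_eq_zero fun i _ => callzero i, add_zero] at h1
      exact h1
    intro j
    cases j with
    | none => exact hnone
    | some i => exact callzero i
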